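/- arXiv:1904.01926 — 3 statements merged into one kernel-verified Lean document; each statement's English description precedes it below -/
import Mathlib

section
/- Let Φ have full column rank with pseudoinverse Φ†, E a perturbation with Δ = EᵀΦ + ΦᵀE + EᵀE satisfying ‖Φ†ᵀΔΦ†‖₂ < 1, and let Φ̃ = Φ + E. Then Φ̃† = Φ† + (ΦᵀΦ)^{-1}Eᵀ + S_Φ Φᵀ + S_Φ Eᵀ, where S_Φ = Φ†[Σ_{k≥1}(-1)^k(Φ†ᵀΔΦ†)^k]Φ†ᵀ. -/
open Matrix
open scoped Matrix.Norms.L2Operator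

private lemma gram_isUnit {M K : ℕ} (Φ : Matrix (Fin M) (Fin K) ℝ)
    (hrank : Function.Injective Φ.mulVec) : IsUnit (Φᵀ * Φ) := by
  rw [← Matrix.mulVec_injective_iff_isUnit]
  intro x y hxy
  have hd : (Φᵀ * Φ) *ᵥ (x - y) = 0 := by
    have : (Φᵀ * Φ) *ᵥ x = (Φᵀ * Φ) *ᵥ y := hxy
    rw [Matrix.mulVec_sub, this, sub_self]
  have h0 : (Φ *ᵥ (x - y)) ⬝ᵥ (Φ *ᵥ (x - y)) = 0 := by
    have := congrArg (fun v => dotProduct (x - y) v) hd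
    simpa [← Matrix.mulVec_mulVec, Matrix.dotProduct_mulVec, Matrix.vecMul_transpose]
      using this
  have hΦ0 : Φ *ᵥ (x - y) = 0 := dotProduct_self_eq_zero.mp h0
  have : x - y = 0 := by
    apply hrank
    simpa [Matrix.mulVec_zero] using hΦ0
  exact sub_eq_zero.mp this

/-- Expansion of the perturbed pseudoinverse:
`Φ̃† = Φ† + (ΦᵀΦ)⁻¹Eᵀ + S_Φ Φᵀ + S_Φ Eᵀ` where `S_Φ` is the Neumann-series remainder. -/
theorem pinv_perturbation_expansion (M K : ℕ)
    (Φ E : Matrix (Fin M) (Fin K) ℝ)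
    (hrank : Function.Injective Φ.mulVec)
    (hrank' : Function.Injective (Φ + E).mulVec)
    (pinv : Matrix (Fin K) (Fin M) ℝ) (hpinv : pinv = (Φᵀ * Φ)⁻¹ * Φᵀ)
    (Δ : Matrix (Fin K) (Fin K) ℝ) (hΔ : Δ = Eᵀ * Φ + Φᵀ * E + Eᵀ * E)
    (hsmall : ‖pinvᵀ * Δ * pinv‖ < 1)
    (SΦ : Matrix (Fin K) (Fin K) ℝ)
    (hS : SΦ = pinv * (∑' k : ℕ, ((-1 : ℝ) ^ (k + 1)) • (pinvᵀ * Δ * pinv) ^ (k + 1)) * pinvᵀ) :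
    ((Φ + E)ᵀ * (Φ + E))⁻¹ * (Φ + E)ᵀ = pinv + (Φᵀ * Φ)⁻¹ * Eᵀ + SΦ * Φᵀ + SΦ * Eᵀ := by
  haveI : CompleteSpace (Matrix (Fin M) (Fin M) ℝ) := FiniteDimensional.complete ℝ _
  set A : Matrix (Fin K) (Fin K) ℝ := Φᵀ * Φ with hA
  set G : Matrix (Fin K) (Fin K) ℝ := A⁻¹ with hG
  set T := pinvᵀ * Δ * pinv with hT
  have hAunit : IsUnit A := gram_isUnit Φ hrank
  have hAdet : IsUnit A.det := (Matrix.isUnit_iff_isUnit_det A).mp hAunit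
  have hGA : G * A = 1 := Matrix.nonsing_inv_mul A hAdet
  have hGsymm : Gᵀ = G := by
    rw [hG, Matrix.transpose_nonsing_inv]
    congr 1
    rw [hA, Matrix.transpose_mul, Matrix.transpose_transpose]
  have f1 : pinv * Φ = 1 := by
    rw [hpinv, Matrix.mul_assoc]; exact hGA
  have f2 : pinvᵀ = Φ * G := by
    rw [hpinv, Matrix.transpose_mul, Matrix.transpose_transpose, hGsymm]
  have f3 : pinv * pinvᵀ = G := by
    rw [f2, ← Matrix.mul_assoc, f1, Matrix.one_mul]
  have f4 : pinvᵀ * A = Φ := by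
    rw [f2, Matrix.mul_assoc, hGA, Matrix.mul_one]
  have f5 : T * Φ = pinvᵀ * Δ := by
    rw [hT, Matrix.mul_assoc, f1, Matrix.mul_one]
  -- Neumann series
  have hsmall' : ‖-T‖ < 1 := by rwa [norm_neg]
  have hN : SΦ = pinv * (∑' k : ℕ, (-T) ^ (k + 1)) * pinvᵀ := by
    rw [hS]
    congr 2
    refine tsum_congr fun k => ?_
    rw [← neg_one_smul ℝ T, smul_pow]
  set N := ∑' k : ℕ, (-T) ^ (k + 1) with hNdef
  have hsucc : N = (∑' k : ℕ, (-T) ^ k) - 1 := geom_series_succ (-T) hsmall'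
  have hgeom : (∑' k : ℕ, (-T) ^ k) * (1 + T) = 1 := by
    have := geom_series_mul_neg (-T) hsmall'
    rwa [sub_neg_eq_add] at this
  have f6 : N * (1 + T) = -T := by
    rw [hsucc, sub_mul, hgeom, one_mul]
    abel
  -- expand perturbed gram matrix
  have hA' : (Φ + E)ᵀ * (Φ + E) = A + Δ := by
    rw [hΔ, hA, Matrix.transpose_add]
    simp only [Matrix.add_mul, Matrix.mul_add]
    abel
  -- left inverse identity
  have hTΦ : pinv * T * Φ = G * Δ := by
    rw [hT, ← f3]
    simp only [Matrix.mul_assoc]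
    rw [f1, Matrix.mul_one]
  have hSA : SΦ * A = pinv * N * Φ := by
    rw [hN, Matrix.mul_assoc, f4]
  have hSΔ : SΦ * Δ = pinv * (N * T) * Φ := by
    rw [hN]
    simp only [Matrix.mul_assoc]
    rw [f5]
  have hsum : SΦ * A + SΦ * Δ = pinv * (N * (1 + T)) * Φ := by
    rw [hSA, hSΔ, Matrix.mul_add N, Matrix.mul_one, Matrix.mul_add pinv, Matrix.add_mul]
  have hS' : SΦ * A + SΦ * Δ = -(G * Δ) := by
    rw [hsum, f6, Matrix.mul_neg, Matrix.neg_mul, hTΦ]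
  have hleft : (G + SΦ) * (A + Δ) = 1 := by
    have hexp : (G + SΦ) * (A + Δ) = G * A + G * Δ + (SΦ * A + SΦ * Δ) := by noncomm_ring
    rw [hexp, hS', hGA]
    abel
  have hinv : ((Φ + E)ᵀ * (Φ + E))⁻¹ = G + SΦ :=
    Matrix.inv_eq_left_inv (by rw [hA']; exact hleft)
  rw [hinv, hpinv, Matrix.transpose_add]
  simp only [Matrix.mul_add, Matrix.add_mul]
  abel
end

section
/- Under the assumptions of the previous expansion, with D = 2‖E‖₂‖Φ‖₂ + ‖E‖₂² and D‖Φ†‖₂² < 1, the perturbation F of the pseudoinverse satisfies ‖F‖₂ ≤ ‖E‖₂‖Φ†‖₂² + (D‖Φ†‖₂⁴/(1 − D‖Φ†‖₂²))·(‖Φ‖₂ + ‖E‖₂). -/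
open Matrix
open scoped Matrix.Norms.L2Operator

private lemma norm_transpose_aux {m k : ℕ} (A : Matrix (Fin m) (Fin k) ℝ) :
    ‖Aᵀ‖ = ‖A‖ := by
  rw [← Matrix.l2_opNorm_conjTranspose A, Matrix.conjTranspose_eq_transpose_of_trivial]

private lemma gram_isUnit_s16 {m k : ℕ} (M : Matrix (Fin m) (Fin k) ℝ)
    (h : Function.Injective M.mulVec) : IsUnit (Mᵀ * M) := by
  rw [← Matrix.mulVec_injective_iff_isUnit]
  intro x y hxy
  apply h
  have hd : (Mᵀ * M) *ᵥ (x - y) = 0 := by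
    rw [Matrix.mulVec_sub, hxy, sub_self]
  have h0 : (M *ᵥ (x - y)) ⬝ᵥ (M *ᵥ (x - y)) = 0 := by
    have := congrArg (fun v => (x - y) ⬝ᵥ v) hd
    simpa [← Matrix.mulVec_mulVec, Matrix.dotProduct_mulVec,
      Matrix.vecMul_transpose] using this
  have hMv : M *ᵥ (x - y) = 0 := by
    ext i
    have hnn : ∀ j ∈ Finset.univ, 0 ≤ (M *ᵥ (x - y)) j * (M *ᵥ (x - y)) j :=
      fun j _ => mul_self_nonneg _
    have := (Finset.sum_eq_zero_iff_of_nonneg hnn).mp h0 i (Finset.mem_univ i)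
    simpa [mul_self_eq_zero] using this
  have : M *ᵥ x - M *ᵥ y = 0 := by rwa [← Matrix.mulVec_sub]
  exact sub_eq_zero.mp this

/-- Spectral-norm bound on the perturbation `F` of the pseudoinverse:
`‖F‖₂ ≤ ‖E‖₂‖Φ†‖₂² + (D‖Φ†‖₂⁴/(1 − D‖Φ†‖₂²))·(‖Φ‖₂ + ‖E‖₂)`,
where `D = 2‖E‖₂‖Φ‖₂ + ‖E‖₂²`. -/
theorem pinv_perturbation_norm_bound (M K : ℕ)
    (Φ E : Matrix (Fin M) (Fin K) ℝ)
    (hrank : Function.Injective Φ.mulVec)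
    (hrank' : Function.Injective (Φ + E).mulVec)
    (pinv : Matrix (Fin K) (Fin M) ℝ) (hpinv : pinv = (Φᵀ * Φ)⁻¹ * Φᵀ)
    (Δ : Matrix (Fin K) (Fin K) ℝ) (hΔ : Δ = Eᵀ * Φ + Φᵀ * E + Eᵀ * E)
    (hsmall : ‖pinvᵀ * Δ * pinv‖ < 1)
    (D : ℝ) (hD : D = 2 * ‖E‖ * ‖Φ‖ + ‖E‖ ^ 2) (hDsmall : D * ‖pinv‖ ^ 2 < 1)
    (F : Matrix (Fin M) (Fin K) ℝ)
    (hF : Fᵀ = ((Φ + E)ᵀ * (Φ + E))⁻¹ * (Φ + E)ᵀ - pinv) :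
    ‖F‖ ≤ ‖E‖ * ‖pinv‖ ^ 2 +
      D * ‖pinv‖ ^ 4 / (1 - D * ‖pinv‖ ^ 2) * (‖Φ‖ + ‖E‖) := by
  set A := Φᵀ * Φ with hA
  set B := (Φ + E)ᵀ * (Φ + E) with hB
  have hAunit : IsUnit A := gram_isUnit_s16 Φ hrank
  have hBunit : IsUnit B := gram_isUnit_s16 (Φ + E) hrank'
  have hAdet : IsUnit A.det := (Matrix.isUnit_iff_isUnit_det A).mp hAunit
  have hBdet : IsUnit B.det := (Matrix.isUnit_iff_isUnit_det B).mp hBunit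
  have hAinvA : A⁻¹ * A = 1 := Matrix.nonsing_inv_mul A hAdet
  have hAAinv : A * A⁻¹ = 1 := Matrix.mul_nonsing_inv A hAdet
  have hBBinv : B * B⁻¹ = 1 := Matrix.mul_nonsing_inv B hBdet
  -- B = A + Δ
  have hBA : B = A + Δ := by
    rw [hB, hA, hΔ, Matrix.transpose_add, Matrix.add_mul, Matrix.mul_add, Matrix.mul_add]
    abel
  -- A⁻¹ = pinv * pinvᵀ
  have hAsymm : Aᵀ = A := by rw [hA, Matrix.transpose_mul, Matrix.transpose_transpose]
  have hAinvEq : A⁻¹ = pinv * pinvᵀ := by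
    rw [hpinv, Matrix.transpose_mul, Matrix.transpose_nonsing_inv, hAsymm]
    calc A⁻¹ = A⁻¹ * 1 := by rw [mul_one]
    _ = A⁻¹ * (A * A⁻¹) := by rw [hAAinv]
    _ = A⁻¹ * Φᵀ * (Φ * A⁻¹) := by rw [hA]; simp only [Matrix.mul_assoc]
  -- key inverse identity
  have hkey : B⁻¹ = A⁻¹ - A⁻¹ * Δ * B⁻¹ := by
    have h1 : A⁻¹ * (A + Δ) * B⁻¹ = B⁻¹ + A⁻¹ * Δ * B⁻¹ := by
      rw [Matrix.mul_add, Matrix.add_mul, hAinvA, Matrix.one_mul]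
    have h2 : A⁻¹ * (A + Δ) * B⁻¹ = A⁻¹ := by
      rw [← hBA, Matrix.mul_assoc, hBBinv, mul_one]
    rw [h1] at h2
    linear_combination (norm := abel) h2
  set S : Matrix (Fin K) (Fin K) ℝ := B⁻¹ - A⁻¹ with hS
  have hSeq : S = -(A⁻¹ * Δ * (A⁻¹ + S)) := by
    have hBinv : A⁻¹ + S = B⁻¹ := by rw [hS]; abel
    rw [hBinv, hS]
    linear_combination (norm := abel) hkey
  -- norms
  have hp2 : ‖A⁻¹‖ ≤ ‖pinv‖ ^ 2 := by
    rw [hAinvEq, sq]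
    calc ‖pinv * pinvᵀ‖ ≤ ‖pinv‖ * ‖pinvᵀ‖ := Matrix.l2_opNorm_mul _ _
    _ = ‖pinv‖ * ‖pinv‖ := by rw [norm_transpose_aux]
  have hΔD : ‖Δ‖ ≤ D := by
    rw [hΔ, hD]
    calc ‖Eᵀ * Φ + Φᵀ * E + Eᵀ * E‖ ≤ ‖Eᵀ * Φ + Φᵀ * E‖ + ‖Eᵀ * E‖ := norm_add_le _ _
    _ ≤ ‖Eᵀ * Φ‖ + ‖Φᵀ * E‖ + ‖Eᵀ * E‖ := by
        have := norm_add_le (Eᵀ * Φ) (Φᵀ * E); linarith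
    _ ≤ ‖Eᵀ‖ * ‖Φ‖ + ‖Φᵀ‖ * ‖E‖ + ‖Eᵀ‖ * ‖E‖ := by
        have h1 := Matrix.l2_opNorm_mul Eᵀ Φ
        have h2 := Matrix.l2_opNorm_mul Φᵀ E
        have h3 := Matrix.l2_opNorm_mul Eᵀ E
        linarith
    _ = 2 * ‖E‖ * ‖Φ‖ + ‖E‖ ^ 2 := by
        rw [norm_transpose_aux, norm_transpose_aux]; ring
  have hD0 : 0 ≤ D := by
    rw [hD]; positivity
  have hden : 0 < 1 - D * ‖pinv‖ ^ 2 := by linarith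
  -- bound on S
  have hSbound : ‖S‖ ≤ D * ‖pinv‖ ^ 4 / (1 - D * ‖pinv‖ ^ 2) := by
    have hstep : ‖S‖ ≤ ‖A⁻¹‖ * ‖Δ‖ * (‖A⁻¹‖ + ‖S‖) := by
      calc ‖S‖ = ‖A⁻¹ * Δ * (A⁻¹ + S)‖ := by nth_rewrite 1 [hSeq]; rw [norm_neg]
      _ ≤ ‖A⁻¹ * Δ‖ * ‖A⁻¹ + S‖ := Matrix.l2_opNorm_mul _ _
      _ ≤ ‖A⁻¹‖ * ‖Δ‖ * (‖A⁻¹‖ + ‖S‖) := by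
          have h1 := Matrix.l2_opNorm_mul A⁻¹ Δ
          have h2 := norm_add_le A⁻¹ S
          have h3 : (0:ℝ) ≤ ‖A⁻¹ + S‖ := norm_nonneg _
          nlinarith [norm_nonneg (A⁻¹ * Δ), norm_nonneg A⁻¹, norm_nonneg Δ,
            norm_nonneg S]
    rw [le_div_iff₀ hden]
    have haΔ : ‖A⁻¹‖ * ‖Δ‖ ≤ D * ‖pinv‖ ^ 2 := by
      calc ‖A⁻¹‖ * ‖Δ‖ ≤ ‖pinv‖ ^ 2 * D :=
        mul_le_mul hp2 hΔD (norm_nonneg _) (by positivity)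
      _ = D * ‖pinv‖ ^ 2 := by ring
    have hstep' : ‖S‖ ≤ ‖A⁻¹‖ * ‖Δ‖ * ‖A⁻¹‖ + ‖A⁻¹‖ * ‖Δ‖ * ‖S‖ := by
      rw [← mul_add]; exact hstep
    have h1 : ‖A⁻¹‖ * ‖Δ‖ * ‖A⁻¹‖ ≤ D * ‖pinv‖ ^ 2 * ‖pinv‖ ^ 2 :=
      mul_le_mul haΔ hp2 (norm_nonneg _) (by positivity)
    have h2 : ‖A⁻¹‖ * ‖Δ‖ * ‖S‖ ≤ D * ‖pinv‖ ^ 2 * ‖S‖ :=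
      mul_le_mul_of_nonneg_right haΔ (norm_nonneg S)
    nlinarith [h1, h2, hstep']
  -- decomposition of Fᵀ
  have hFdecomp : Fᵀ = A⁻¹ * Eᵀ + S * (Φᵀ + Eᵀ) := by
    have hBinv : B⁻¹ = A⁻¹ + S := by rw [hS]; abel
    rw [hF, hpinv, hBinv, Matrix.transpose_add, Matrix.add_mul,
      Matrix.mul_add, Matrix.mul_add]
    abel
  have hnormF : ‖F‖ = ‖Fᵀ‖ := (norm_transpose_aux F).symm
  rw [hnormF, hFdecomp]
  calc ‖A⁻¹ * Eᵀ + S * (Φᵀ + Eᵀ)‖ ≤ ‖A⁻¹ * Eᵀ‖ + ‖S * (Φᵀ + Eᵀ)‖ := norm_add_le _ _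
  _ ≤ ‖A⁻¹‖ * ‖Eᵀ‖ + ‖S‖ * ‖Φᵀ + Eᵀ‖ := by
      have h1 := Matrix.l2_opNorm_mul A⁻¹ Eᵀ
      have h2 := Matrix.l2_opNorm_mul S (Φᵀ + Eᵀ)
      linarith
  _ ≤ ‖A⁻¹‖ * ‖E‖ + ‖S‖ * (‖Φ‖ + ‖E‖) := by
      rw [norm_transpose_aux]
      have h2 : ‖Φᵀ + Eᵀ‖ ≤ ‖Φ‖ + ‖E‖ := by
        calc ‖Φᵀ + Eᵀ‖ ≤ ‖Φᵀ‖ + ‖Eᵀ‖ := norm_add_le _ _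
        _ = ‖Φ‖ + ‖E‖ := by rw [norm_transpose_aux, norm_transpose_aux]
      have := mul_le_mul_of_nonneg_left h2 (norm_nonneg S)
      linarith
  _ ≤ ‖E‖ * ‖pinv‖ ^ 2 + D * ‖pinv‖ ^ 4 / (1 - D * ‖pinv‖ ^ 2) * (‖Φ‖ + ‖E‖) := by
      have h1 := mul_le_mul_of_nonneg_right hp2 (norm_nonneg E)
      have h2 : (0:ℝ) ≤ ‖Φ‖ + ‖E‖ := by positivity
      have h3 := mul_le_mul_of_nonneg_right hSbound h2
      linarith
end

section
/- Let x = Σ_{k=1}^K a_k δ_{t_k} with a_k > 0 be a nonnegative discrete measure on [0,1] and y_j = Σ_k a_k φ(t_k − s_j). If there exists λ* ∈ ℝ^M such that q(s) = Σ_j λ*_j φ(s − s_j) satisfies q(t_k) = 1 for all k and q(s) < 1 for all s ∉ {t₁,…,t_K}, and the matrix (φ(t_k − s_j))_{j,k} has rank K, then x is the unique minimizer of the total mass ∫ dx̂ among nonnegative measures x̂ on [0,1] satisfying ∫ φ(· − s_j) dx̂ = y_j for all j. -/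
open MeasureTheory

/-- Exact recovery for nonnegative super-resolution: if a dual certificate
`q(s) = Σ_j λ*_j φ(s − s_j)` exists with `q(t_k) = 1` and `q < 1` off the support,
and the matrix `(φ(t_k − s_j))` has rank `K`, then the discrete measure
`x = Σ_k a_k δ_{t_k}` is the unique minimizer of total mass among nonnegative
measures on `[0,1]` matching the measurements. -/
theorem exact_recovery (φ : ℝ → ℝ) (hφ : Continuous φ)
    (M K : ℕ) (s : Fin M → ℝ) (hs : ∀ j, s j ∈ Set.Icc (0 : ℝ) 1)
    (t : Fin K → ℝ) (ht : ∀ k, t k ∈ Set.Icc (0 : ℝ) 1)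
    (a : Fin K → ℝ) (ha : ∀ k, 0 < a k)
    (y : Fin M → ℝ) (hy : ∀ j, y j = ∑ k : Fin K, a k * φ (t k - s j))
    (lamstar : Fin M → ℝ)
    (hq1 : ∀ k : Fin K, ∑ j : Fin M, lamstar j * φ (t k - s j) = 1)
    (hq2 : ∀ x : ℝ, x ∈ Set.Icc (0 : ℝ) 1 → x ∉ Set.range t →
      ∑ j : Fin M, lamstar j * φ (x - s j) < 1)
    (hrank : (Matrix.of fun (j : Fin M) (k : Fin K) => φ (t k - s j)).rank = K) :
    ∀ μ : Measure ℝ, IsFiniteMeasure μ → μ (Set.Icc (0 : ℝ) 1)ᶜ = 0 →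
      (∀ j : Fin M, ∫ u, φ (u - s j) ∂μ = y j) →
      ((∑ k : Fin K, ENNReal.ofReal (a k) • Measure.dirac (t k)) Set.univ ≤ μ Set.univ ∧
        (μ Set.univ = (∑ k : Fin K, ENNReal.ofReal (a k) • Measure.dirac (t k)) Set.univ →
          μ = ∑ k : Fin K, ENNReal.ofReal (a k) • Measure.dirac (t k))) := by
  intro μ hfin hsupp hmeas
  have hae : ∀ᵐ u ∂μ, u ∈ Set.Icc (0:ℝ) 1 := by
    rw [ae_iff]
    exact hsupp
  -- integrability of continuous functions against μ
  have hint : ∀ f : ℝ → ℝ, Continuous f → Integrable f μ := by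
    intro f hf
    obtain ⟨C, hC⟩ :=
      (isCompact_Icc (a := (0:ℝ)) (b := 1)).exists_bound_of_continuousOn hf.continuousOn
    refine (integrable_const C).mono' hf.aestronglyMeasurable ?_
    filter_upwards [hae] with u hu
    exact hC u hu
  set q : ℝ → ℝ := fun u => ∑ j, lamstar j * φ (u - s j) with hqdef
  have hφj : ∀ j, Continuous fun u : ℝ => φ (u - s j) :=
    fun j => hφ.comp (continuous_id.sub continuous_const)
  have hqc : Continuous q :=
    continuous_finset_sum _ fun j _ => continuous_const.mul (hφj j)
  have hintq : Integrable q μ := hint q hqc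
  have hIq : ∫ u, q u ∂μ = ∑ k, a k := by
    have h1 : ∫ u, q u ∂μ = ∑ j, lamstar j * ∫ u, φ (u - s j) ∂μ := by
      rw [show (fun u => q u) = fun u => ∑ j, lamstar j * φ (u - s j) from rfl]
      rw [integral_finset_sum _ fun j _ => (hint _ (hφj j)).const_mul (lamstar j)]
      exact Finset.sum_congr rfl fun j _ => integral_const_mul _ _
    rw [h1]
    have : ∀ j, lamstar j * ∫ u, φ (u - s j) ∂μ = ∑ k, a k * (lamstar j * φ (t k - s j)) := by
      intro j
      rw [hmeas j, hy j, Finset.mul_sum]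
      exact Finset.sum_congr rfl fun k _ => by ring
    rw [Finset.sum_congr rfl fun j _ => this j, Finset.sum_comm]
    refine Finset.sum_congr rfl fun k _ => ?_
    rw [← Finset.mul_sum, hq1 k, mul_one]
  have hxuniv : ((∑ k, ENNReal.ofReal (a k) • Measure.dirac (t k)) Set.univ : ENNReal)
      = ENNReal.ofReal (∑ k, a k) := by
    rw [Measure.finset_sum_apply]
    simp [ENNReal.ofReal_sum_of_nonneg (fun k _ => (ha k).le)]
  have hqle : ∀ᵐ u ∂μ, q u ≤ 1 := by
    filter_upwards [hae] with u hu
    by_cases h : u ∈ Set.range t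
    · obtain ⟨k, rfl⟩ := h
      exact le_of_eq (hq1 k)
    · exact (hq2 u hu h).le
  have hle : ∑ k, a k ≤ (μ Set.univ).toReal := by
    have := integral_mono_ae hintq (integrable_const (1:ℝ)) hqle
    rw [hIq] at this
    simp at this; exact this
  refine ⟨hxuniv ▸ ENNReal.ofReal_le_of_le_toReal hle, ?_⟩
  intro heq
  have hμr : (μ Set.univ).toReal = ∑ k, a k := by
    rw [heq, hxuniv, ENNReal.toReal_ofReal (Finset.sum_nonneg fun k _ => (ha k).le)]
  -- q = 1 a.e.
  have hz : ∫ u, (1 - q u) ∂μ = 0 := by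
    rw [integral_sub (integrable_const 1) hintq, hIq]
    simp [hμr]
    exact sub_eq_zero.mpr hμr
  have haeq : ∀ᵐ u ∂μ, 1 - q u = 0 := by
    refine (integral_eq_zero_iff_of_nonneg_ae ?_ ((integrable_const 1).sub hintq)).mp hz
    filter_upwards [hqle] with u hu
    simpa using hu
  have haer : ∀ᵐ u ∂μ, u ∈ Set.range t := by
    filter_upwards [hae, haeq] with u hu h1
    by_contra h
    have := hq2 u hu h
    rw [hqdef] at *
    simp only at h1
    linarith
  have hsupp2 : μ (Set.range t)ᶜ = 0 := by
    rw [ae_iff] at haer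
    exact haer
  -- injectivity from rank
  set A : Matrix (Fin M) (Fin K) ℝ := Matrix.of fun j k => φ (t k - s j) with hA
  have hinj : Function.Injective A.mulVecLin := by
    rw [← LinearMap.ker_eq_bot]
    have h1 := A.mulVecLin.finrank_range_add_finrank_ker
    rw [Matrix.rank] at hrank
    rw [hrank] at h1
    simp only [Module.finrank_pi, Fintype.card_fin] at h1
    have h2 : Module.finrank ℝ (LinearMap.ker A.mulVecLin) = 0 := by omega
    exact Submodule.finrank_eq_zero.mp h2
  have htinj : Function.Injective t := by
    intro k k' hkk'
    have hcol : A.mulVecLin (Pi.single k 1) = A.mulVecLin (Pi.single k' 1) := by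
      ext j
      simp [Matrix.mulVecLin_apply, Matrix.mulVec_single, hA, hkk']
    have := hinj hcol
    have h2 := congrFun this k
    by_contra h
    rw [Pi.single_eq_same, Pi.single_eq_of_ne h] at h2
    exact one_ne_zero h2
  -- measure decomposition
  have hdec : μ = ∑ k, μ {t k} • Measure.dirac (t k) := by
    ext E hE
    rw [Measure.finset_sum_apply]
    have hS : MeasurableSet (Set.range t) := (Set.finite_range t).measurableSet
    have h1 : μ E = μ (E ∩ Set.range t) := by
      have h2 : μ (E \ Set.range t) = 0 :=
        measure_mono_null (Set.diff_subset_compl E _) hsupp2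
      have h3 := measure_inter_add_diff (μ := μ) E hS
      rw [h2, add_zero] at h3
      exact h3.symm
    have h4 : E ∩ Set.range t = ⋃ k ∈ (Finset.univ : Finset (Fin K)), E ∩ {t k} := by
      ext u
      simp [Set.mem_range, and_comm]
      tauto
    rw [h1, h4, measure_biUnion_finset ?_ fun k _ => hE.inter (measurableSet_singleton _)]
    · refine Finset.sum_congr rfl fun k _ => ?_
      rw [Measure.smul_apply, Measure.dirac_apply' _ hE]
      by_cases h : t k ∈ E
      · rw [Set.inter_eq_right.mpr (Set.singleton_subset_iff.mpr h)]
        simp [Set.indicator_of_mem h]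
      · rw [Set.inter_singleton_eq_empty.mpr h]
        simp [Set.indicator_of_notMem h]
    · intro k _ k' _ hne
      refine Set.disjoint_left.mpr fun u hu hu' => ?_
      exact hne (htinj (hu.2.symm.trans hu'.2).symm ▸ rfl)
  -- measurements determine coefficients
  have hbk : ∀ j, ∑ k, (μ {t k}).toReal * φ (t k - s j) = ∑ k, a k * φ (t k - s j) := by
    intro j
    have h1 := hmeas j
    rw [hy j] at h1
    have h2 : ∫ u, φ (u - s j) ∂μ = ∑ k, (μ {t k}).toReal * φ (t k - s j) := by
      conv_lhs => rw [hdec]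
      rw [integral_finset_sum_measure ?_]
      · refine Finset.sum_congr rfl fun k _ => ?_
        rw [integral_smul_measure, integral_dirac]
        simp
      · intro k _
        have hd : Integrable (fun u => φ (u - s j)) (Measure.dirac (t k)) := by
          refine (integrable_const (φ (t k - s j))).congr ?_
          rw [MeasureTheory.ae_dirac_eq]
          exact Filter.eventually_pure.mpr rfl
        exact hd.smul_measure (measure_ne_top μ _)
    rw [h2] at h1
    exact h1
  have hba : (fun k => (μ {t k}).toReal) = a := by
    apply hinj
    ext j
    simp only [Matrix.mulVecLin_apply, Matrix.mulVec, dotProduct, hA, Matrix.of_apply]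
    calc ∑ k, φ (t k - s j) * (μ {t k}).toReal
        = ∑ k, (μ {t k}).toReal * φ (t k - s j) := Finset.sum_congr rfl fun k _ => mul_comm _ _
      _ = ∑ k, a k * φ (t k - s j) := hbk j
      _ = ∑ k, φ (t k - s j) * a k := Finset.sum_congr rfl fun k _ => mul_comm _ _
  rw [hdec]
  refine Finset.sum_congr rfl fun k _ => ?_
  rw [show μ {t k} = ENNReal.ofReal (a k) from ?_]
  rw [← congrFun hba k, ENNReal.ofReal_toReal (measure_ne_top μ _)]
end
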